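/- Suppose 𝒜 satisfies RIP(2r, δ). Then for every X, D ∈ ℝ^{n×r}, the Hessian quadratic form of f_c satisfies Q(D) := (2/m)( ‖𝒜(XDᵀ + DXᵀ)‖² + 2⟨𝒜(XXᵀ − M*), 𝒜(DDᵀ)⟩ ) ≤ 2(1+δ)·‖XDᵀ + DXᵀ‖_F² + 4·√((1+δ)·f_c(X))·‖D‖_F². -/

import Mathlib

open Matrix BigOperators

noncomputable section

/-- Frobenius inner product `⟨A, B⟩ = tr(Aᵀ B)`. -/
def finner {a b : ℕ} (A B : Matrix (Fin a) (Fin b) ℝ) : ℝ := (Aᵀ * B).trace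

/-- Frobenius norm. -/
def fnorm {a b : ℕ} (A : Matrix (Fin a) (Fin b) ℝ) : ℝ :=
  Real.sqrt (∑ i, ∑ j, (A i j) ^ 2)

/-- Euclidean norm on ℝ^m. -/
def vnorm {m : ℕ} (v : Fin m → ℝ) : ℝ := Real.sqrt (∑ i, (v i) ^ 2)

/-- Euclidean inner product on ℝ^m. -/
def vinner {m : ℕ} (v w : Fin m → ℝ) : ℝ := ∑ i, v i * w i

/-- Measurement operator 𝒜(M)_i = ⟨A_i, M⟩. -/
def calA {n m : ℕ} (A : Fin m → Matrix (Fin n) (Fin n) ℝ)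
    (M : Matrix (Fin n) (Fin n) ℝ) : Fin m → ℝ :=
  fun i => finner (A i) M

/-- Restricted isometry property with parameters (k, δ). -/
def RIP {n m : ℕ} (A : Fin m → Matrix (Fin n) (Fin n) ℝ) (k : ℕ) (δ : ℝ) : Prop :=
  0 ≤ δ ∧ δ < 1 ∧ ∀ M : Matrix (Fin n) (Fin n) ℝ, M.rank ≤ k →
    (1 - δ) * fnorm M ^ 2 ≤ (1 / (m : ℝ)) * vnorm (calA A M) ^ 2 ∧
    (1 / (m : ℝ)) * vnorm (calA A M) ^ 2 ≤ (1 + δ) * fnorm M ^ 2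

/-- Noiseless loss. -/
def fc {n m r : ℕ} (A : Fin m → Matrix (Fin n) (Fin n) ℝ)
    (Mstar : Matrix (Fin n) (Fin n) ℝ) (X : Matrix (Fin n) (Fin r) ℝ) : ℝ :=
  (1 / (m : ℝ)) * vnorm (calA A (X * Xᵀ - Mstar)) ^ 2

/-- Noisy loss. -/
def fnoisy {n m r : ℕ} (A : Fin m → Matrix (Fin n) (Fin n) ℝ) (y : Fin m → ℝ)
    (X : Matrix (Fin n) (Fin r) ℝ) : ℝ :=
  (1 / (m : ℝ)) * vnorm (fun i => calA A (X * Xᵀ) i - y i) ^ 2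

/-- Gradient of the noisy loss. -/
def gradf {n m r : ℕ} (A : Fin m → Matrix (Fin n) (Fin n) ℝ) (y : Fin m → ℝ)
    (X : Matrix (Fin n) (Fin r) ℝ) : Matrix (Fin n) (Fin r) ℝ :=
  (4 / (m : ℝ)) • ∑ i, (finner (A i) (X * Xᵀ) - y i) • (A i * X)

/-- Gradient of the noiseless loss. -/
def gradfc {n m r : ℕ} (A : Fin m → Matrix (Fin n) (Fin n) ℝ)
    (Mstar : Matrix (Fin n) (Fin n) ℝ) (X : Matrix (Fin n) (Fin r) ℝ) :
    Matrix (Fin n) (Fin r) ℝ :=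
  (4 / (m : ℝ)) • ∑ i, finner (A i) (X * Xᵀ - Mstar) • (A i * X)

/-- Spectral (operator) norm. -/
def specNorm {n : ℕ} (B : Matrix (Fin n) (Fin n) ℝ) : ℝ :=
  sSup {c | ∃ v : Fin n → ℝ, vnorm v ≤ 1 ∧ c = vnorm (B.mulVec v)}

open scoped Classical in
/-- positive semidefinite square root (junk value 0 if not PSD). -/
def matSqrt {k : ℕ} (P : Matrix (Fin k) (Fin k) ℝ) : Matrix (Fin k) (Fin k) ℝ :=
  if h : P.PosSemidef then
    (h.1.eigenvectorUnitary : Matrix (Fin k) (Fin k) ℝ) *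
      diagonal (fun i => Real.sqrt (h.1.eigenvalues i)) *
      (star h.1.eigenvectorUnitary : Matrix (Fin k) (Fin k) ℝ)
  else 0

/-- P-norm. -/
def pnorm {a k : ℕ} (P : Matrix (Fin k) (Fin k) ℝ) (X : Matrix (Fin a) (Fin k) ℝ) : ℝ :=
  fnorm (X * matSqrt P)

/-- dual P-norm. -/
def pdnorm {a k : ℕ} (P : Matrix (Fin k) (Fin k) ℝ) (X : Matrix (Fin a) (Fin k) ℝ) : ℝ :=
  fnorm (X * (matSqrt P)⁻¹)

/-- the preconditioner matrix XᵀX + ηI. -/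
def Pmat {n r : ℕ} (X : Matrix (Fin n) (Fin r) ℝ) (η : ℝ) : Matrix (Fin r) (Fin r) ℝ :=
  Xᵀ * X + η • 1

/-- k-th largest eigenvalue (1-indexed) of a Hermitian matrix. -/
def lamK {n : ℕ} {M : Matrix (Fin n) (Fin n) ℝ} (hM : M.IsHermitian) (k : ℕ) : ℝ :=
  (((List.ofFn hM.eigenvalues).insertionSort (· ≥ ·)).getD (k - 1) 0)



lemma vnorm_nonneg' {m : ℕ} (v : Fin m → ℝ) : 0 ≤ vnorm v := Real.sqrt_nonneg _

lemma fnorm_nonneg' {a b : ℕ} (A : Matrix (Fin a) (Fin b) ℝ) : 0 ≤ fnorm A := Real.sqrt_nonneg _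

lemma vnorm_sq' {m : ℕ} (v : Fin m → ℝ) : vnorm v ^ 2 = ∑ i, v i ^ 2 :=
  Real.sq_sqrt (Finset.sum_nonneg fun i _ => sq_nonneg _)

lemma fnorm_sq' {a b : ℕ} (A : Matrix (Fin a) (Fin b) ℝ) :
    fnorm A ^ 2 = ∑ i, ∑ j, (A i j) ^ 2 :=
  Real.sq_sqrt (Finset.sum_nonneg fun i _ => Finset.sum_nonneg fun j _ => sq_nonneg _)

lemma vinner_le_vnorm {m : ℕ} (v w : Fin m → ℝ) : vinner v w ≤ vnorm v * vnorm w :=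
  Real.sum_mul_le_sqrt_mul_sqrt _ _ _

lemma fnorm_mul_self_transpose_le {n r : ℕ} (D : Matrix (Fin n) (Fin r) ℝ) :
    fnorm (D * Dᵀ) ≤ fnorm D ^ 2 := by
  have key : ∀ i j : Fin n, ((D * Dᵀ) i j) ^ 2 ≤ (∑ k, (D i k) ^ 2) * (∑ k, (D j k) ^ 2) := by
    intro i j
    simpa [Matrix.mul_apply, Matrix.transpose_apply] using
      Finset.sum_mul_sq_le_sq_mul_sq Finset.univ (fun k => D i k) (fun k => D j k)
  have h1 : ∑ i, ∑ j, ((D * Dᵀ) i j) ^ 2 ≤ (∑ i, ∑ k, (D i k) ^ 2) ^ 2 := by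
    calc ∑ i, ∑ j, ((D * Dᵀ) i j) ^ 2
        ≤ ∑ i, ∑ j, (∑ k, (D i k) ^ 2) * (∑ k, (D j k) ^ 2) := by
          refine Finset.sum_le_sum fun i _ => Finset.sum_le_sum fun j _ => key i j
      _ = (∑ i, ∑ k, (D i k) ^ 2) ^ 2 := by
          rw [sq, Finset.sum_mul_sum]
  calc fnorm (D * Dᵀ) ≤ Real.sqrt ((∑ i, ∑ k, (D i k) ^ 2) ^ 2) := Real.sqrt_le_sqrt h1
    _ = ∑ i, ∑ k, (D i k) ^ 2 := Real.sqrt_sq (Finset.sum_nonneg fun i _ =>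
        Finset.sum_nonneg fun k _ => sq_nonneg _)
    _ = fnorm D ^ 2 := (fnorm_sq' D).symm

lemma matrix_rank_add_le' {n : ℕ} (A B : Matrix (Fin n) (Fin n) ℝ) :
    (A + B).rank ≤ A.rank + B.rank := by
  have hle : LinearMap.range (A + B).mulVecLin ≤
      LinearMap.range A.mulVecLin ⊔ LinearMap.range B.mulVecLin := by
    rintro x ⟨v, rfl⟩
    rw [Matrix.mulVecLin_add]
    exact Submodule.add_mem_sup (LinearMap.mem_range_self _ v) (LinearMap.mem_range_self _ v)
  calc (A + B).rank
      = Module.finrank ℝ (LinearMap.range (A + B).mulVecLin) := rfl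
    _ ≤ Module.finrank ℝ ↥(LinearMap.range A.mulVecLin ⊔ LinearMap.range B.mulVecLin) :=
        Submodule.finrank_mono hle
    _ ≤ A.rank + B.rank := Submodule.finrank_add_le_finrank_add_finrank _ _

/-- bound on the Hessian quadratic form under RIP. -/
theorem hessian_bound {n m r rstar : ℕ} (hn : 0 < n) (hm : 0 < m)
    (hrstar : 0 < rstar) (hrr : rstar ≤ r) {δ : ℝ}
    (A : Fin m → Matrix (Fin n) (Fin n) ℝ) (hA : ∀ i, (A i).IsHermitian)
    (hRIP : RIP A (2 * r) δ)
    (Mstar : Matrix (Fin n) (Fin n) ℝ) (hM : Mstar.PosSemidef)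
    (hrank : Mstar.rank = rstar)
    (X D : Matrix (Fin n) (Fin r) ℝ) :
    (2 / (m : ℝ)) * (vnorm (calA A (X * Dᵀ + D * Xᵀ)) ^ 2
        + 2 * vinner (calA A (X * Xᵀ - Mstar)) (calA A (D * Dᵀ)))
      ≤ 2 * (1 + δ) * fnorm (X * Dᵀ + D * Xᵀ) ^ 2
        + 4 * Real.sqrt ((1 + δ) * fc A Mstar X) * fnorm D ^ 2 := by
  obtain ⟨hd0, hd1, hrip⟩ := hRIP
  have hm' : (0:ℝ) < m := by exact_mod_cast hm
  set S := X * Dᵀ + D * Xᵀ with hS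
  set E := X * Xᵀ - Mstar with hE
  set F := D * Dᵀ with hF
  -- rank bounds
  have hrS : S.rank ≤ 2 * r := by
    calc S.rank ≤ (X * Dᵀ).rank + (D * Xᵀ).rank := matrix_rank_add_le' _ _
      _ ≤ r + r := add_le_add
          ((Matrix.rank_mul_le_left X Dᵀ).trans X.rank_le_width)
          ((Matrix.rank_mul_le_left D Xᵀ).trans D.rank_le_width)
      _ = 2 * r := (two_mul r).symm
  have hrF : F.rank ≤ 2 * r := by
    calc F.rank ≤ r := (Matrix.rank_mul_le_left D Dᵀ).trans D.rank_le_width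
      _ ≤ 2 * r := by omega
  have h1 : (1 / (m:ℝ)) * vnorm (calA A S) ^ 2 ≤ (1 + δ) * fnorm S ^ 2 := (hrip S hrS).2
  have h3 : (1 / (m:ℝ)) * vnorm (calA A F) ^ 2 ≤ (1 + δ) * fnorm F ^ 2 := (hrip F hrF).2
  have h2 : vinner (calA A E) (calA A F) ≤ vnorm (calA A E) * vnorm (calA A F) :=
    vinner_le_vnorm _ _
  have hδpos : (0:ℝ) ≤ 1 + δ := by linarith
  have hfc : fc A Mstar X = (1 / (m:ℝ)) * vnorm (calA A E) ^ 2 := rfl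
  have hfc0 : 0 ≤ fc A Mstar X := by
    rw [hfc]; positivity
  -- key bound on the cross term
  have hcross : (1 / (m:ℝ)) * (vnorm (calA A E) * vnorm (calA A F))
      ≤ Real.sqrt ((1 + δ) * fc A Mstar X) * fnorm D ^ 2 := by
    have ha : (1 / (m:ℝ)) * (vnorm (calA A E) * vnorm (calA A F))
        = Real.sqrt ((1 / (m:ℝ)) * vnorm (calA A E) ^ 2) *
          Real.sqrt ((1 / (m:ℝ)) * vnorm (calA A F) ^ 2) := by
      rw [Real.sqrt_mul (by positivity), Real.sqrt_mul (by positivity),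
        Real.sqrt_sq (vnorm_nonneg' _), Real.sqrt_sq (vnorm_nonneg' _)]
      have hs : Real.sqrt (1 / (m:ℝ)) * Real.sqrt (1 / (m:ℝ)) = 1 / (m:ℝ) :=
        Real.mul_self_sqrt (by positivity)
      linear_combination (-1 : ℝ) * vnorm (calA A E) * vnorm (calA A F) * hs
    rw [ha, ← hfc]
    have hb : Real.sqrt ((1 / (m:ℝ)) * vnorm (calA A F) ^ 2)
        ≤ Real.sqrt (1 + δ) * fnorm D ^ 2 := by
      calc Real.sqrt ((1 / (m:ℝ)) * vnorm (calA A F) ^ 2)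
          ≤ Real.sqrt ((1 + δ) * fnorm F ^ 2) := Real.sqrt_le_sqrt h3
        _ = Real.sqrt (1 + δ) * fnorm F := by
            rw [Real.sqrt_mul hδpos, Real.sqrt_sq (fnorm_nonneg' _)]
        _ ≤ Real.sqrt (1 + δ) * fnorm D ^ 2 :=
            mul_le_mul_of_nonneg_left (fnorm_mul_self_transpose_le D) (Real.sqrt_nonneg _)
    calc Real.sqrt (fc A Mstar X) * Real.sqrt ((1 / (m:ℝ)) * vnorm (calA A F) ^ 2)
        ≤ Real.sqrt (fc A Mstar X) * (Real.sqrt (1 + δ) * fnorm D ^ 2) :=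
          mul_le_mul_of_nonneg_left hb (Real.sqrt_nonneg _)
      _ = Real.sqrt ((1 + δ) * fc A Mstar X) * fnorm D ^ 2 := by
          rw [Real.sqrt_mul hδpos]; ring
  have hcross2 : (1 / (m:ℝ)) * vinner (calA A E) (calA A F)
      ≤ Real.sqrt ((1 + δ) * fc A Mstar X) * fnorm D ^ 2 := by
    refine le_trans ?_ hcross
    exact mul_le_mul_of_nonneg_left h2 (by positivity)
  have expand : (2 / (m:ℝ)) * (vnorm (calA A S) ^ 2 + 2 * vinner (calA A E) (calA A F))
      = 2 * ((1 / (m:ℝ)) * vnorm (calA A S) ^ 2)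
        + 4 * ((1 / (m:ℝ)) * vinner (calA A E) (calA A F)) := by ring
  rw [expand]
  linarith

end
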